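/- For a finite group G, the Burnside ring A(G) has Krull dimension 1: the ideals q(H,p) (p prime) are maximal with residue field ℤ/p, and the ideals q(H,0) are minimal primes with quotient ring ℤ. -/

import Mathlib

open MulAction

/-- The vector of marks of a `G`-set `X`: its `H`-component is the number of `H`-fixed
points `|X^H|`. -/
noncomputable def markVector (G : Type) [Group G] (X : Type) [MulAction G X] :
    Subgroup G → ℤ :=
  fun H => Nat.card (fixedPoints H X)

/-- The set of mark vectors of finite `G`-sets. -/
def GSetMarks (G : Type) [Group G] : Set (Subgroup G → ℤ) :=
  {f | ∃ (X : Type) (_ : Finite X) (_ : MulAction G X), f = markVector G X}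

/-- The Burnside ring `A(G)`, realized (via the injective mark homomorphism) as the
subring of `∏_{H ≤ G} ℤ` generated by the mark vectors of finite `G`-sets. -/
def BurnsideRing (G : Type) [Group G] : Subring (Subgroup G → ℤ) :=
  Subring.closure (GSetMarks G)

theorem mem_gsetMarks (G : Type) [Group G] (X : Type) [hF : Finite X] [hM : MulAction G X] :
    markVector G X ∈ GSetMarks G := ⟨X, hF, hM, rfl⟩

/-- The class `[X] ∈ A(G)` of a finite `G`-set `X`. -/
noncomputable def burnsideMk (G : Type) [Group G] (X : Type) [Finite X] [MulAction G X] :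
    BurnsideRing G :=
  ⟨markVector G X, Subring.subset_closure (mem_gsetMarks G X)⟩

/-- The mark (fixed-point) ring homomorphism `φ_H : A(G) → ℤ`. -/
noncomputable def mark (G : Type) [Group G] (H : Subgroup G) : BurnsideRing G →+* ℤ :=
  (Pi.evalRingHom (fun _ => ℤ) H).comp (BurnsideRing G).subtype

section BurnsideAux

variable {G : Type} [Group G]

lemma mark_surjective (H : Subgroup G) : Function.Surjective (mark G H) :=
  fun n => ⟨(n : BurnsideRing G), map_intCast _ n⟩

lemma ker_mark_eq_of_le {H K : Subgroup G}
    (h : RingHom.ker (mark G K) ≤ RingHom.ker (mark G H)) :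
    RingHom.ker (mark G K) = RingHom.ker (mark G H) := by
  have key : ∀ a, mark G H a = mark G K a := fun a => by
    have h1 : a - ((mark G K a : ℤ) : BurnsideRing G) ∈ RingHom.ker (mark G K) := by
      simp [RingHom.mem_ker]
    have h2 := h h1
    simp only [RingHom.mem_ker, map_sub, map_intCast, sub_eq_zero] at h2
    exact h2
  ext a
  simp [RingHom.mem_ker, key a]

lemma prime_classify [Finite G] (P : Ideal (BurnsideRing G)) (hP : P.IsPrime) :
    ∃ (K : Subgroup G) (q : Ideal ℤ), q.IsPrime ∧ P = Ideal.comap (mark G K) q := by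
  classical
  letI : Algebra (BurnsideRing G) (Subgroup G → ℤ) := (BurnsideRing G).subtype.toAlgebra
  haveI : Fintype (Subgroup G) := Fintype.ofFinite _
  haveI : Algebra.IsIntegral (BurnsideRing G) (Subgroup G → ℤ) := by
    constructor
    intro b
    have hsingle : ∀ (K : Subgroup G) (n : ℤ),
        (Pi.single K n : Subgroup G → ℤ) ∈ integralClosure (BurnsideRing G) (Subgroup G → ℤ) := by
      intro K n
      have he : IsIntegral (BurnsideRing G) (Pi.single K (1:ℤ) : Subgroup G → ℤ) := by
        refine ⟨Polynomial.X ^ 2 - Polynomial.X, ?_, ?_⟩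
        · exact Polynomial.monic_X_pow_sub (by simpa using Polynomial.degree_X_le (R := BurnsideRing G) |>.trans_lt (by norm_num))
        · have hidem : (Pi.single K (1:ℤ) : Subgroup G → ℤ) * Pi.single K 1 = Pi.single K 1 := by
            rw [← Pi.single_mul]; simp
          simp [Polynomial.eval₂_sub, sq, hidem]
      have hn : (Pi.single K n : Subgroup G → ℤ) = n • (Pi.single K (1:ℤ)) := by
        ext L
        by_cases h : L = K
        · subst h; simp
        · simp [Pi.single_apply, h]
      rw [hn]
      exact zsmul_mem (by exact he) n
    have hb : b = ∑ K : Subgroup G, Pi.single K (b K) := (Finset.univ_sum_single b).symm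
    have : b ∈ integralClosure (BurnsideRing G) (Subgroup G → ℤ) := by
      rw [hb]
      exact sum_mem fun K _ => hsingle K (b K)
    exact this
  obtain ⟨Q, -, hQ, hQP⟩ := Ideal.exists_ideal_over_prime_of_isIntegral (S := Subgroup G → ℤ) P ⊥ (by
    intro x hx
    rw [Ideal.mem_comap, Ideal.mem_bot] at hx
    have hx0 : x = 0 := Subtype.ext hx
    rw [hx0]; exact P.zero_mem)
  haveI := hQ
  obtain ⟨K, hK⟩ : ∃ K : Subgroup G, (Pi.single K (1:ℤ) : Subgroup G → ℤ) ∉ Q := by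
    by_contra h
    push_neg at h
    have h1 : (1 : Subgroup G → ℤ) ∈ Q := by
      rw [← Finset.univ_sum_single (1 : Subgroup G → ℤ)]
      exact Ideal.sum_mem _ fun K _ => by simpa using h K
    exact hQ.ne_top (Q.eq_top_of_isUnit_mem h1 isUnit_one)
  have hker : ∀ f : Subgroup G → ℤ, f K = 0 → f ∈ Q := by
    intro f hf
    have h1 : f * Pi.single K 1 = 0 := by
      ext L
      by_cases h : L = K
      · subst h; simp [hf]
      · simp [Pi.single_apply, h]
    have h2 : f * Pi.single K 1 ∈ Q := by rw [h1]; exact Q.zero_mem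
    rcases hQ.mem_or_mem h2 with h | h
    · exact h
    · exact absurd h hK
  have hevalsurj : Function.Surjective (Pi.evalRingHom (fun _ : Subgroup G => ℤ) K) :=
    fun n => ⟨fun _ => n, rfl⟩
  set q : Ideal ℤ := Q.map (Pi.evalRingHom (fun _ : Subgroup G => ℤ) K) with hq
  have hkerle : RingHom.ker (Pi.evalRingHom (fun _ : Subgroup G => ℤ) K) ≤ Q := by
    intro f hf
    exact hker f hf
  haveI hqprime : q.IsPrime := Ideal.map_isPrime_of_surjective hevalsurj hkerle
  have hQeq : Q = Ideal.comap (Pi.evalRingHom (fun _ : Subgroup G => ℤ) K) q := by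
    apply le_antisymm Ideal.le_comap_map
    intro f hf
    rw [Ideal.mem_comap] at hf
    obtain ⟨g, hg, hgf⟩ := (Ideal.mem_map_iff_of_surjective _ hevalsurj).mp hf
    have : f - g ∈ Q := hker _ (by simpa [sub_eq_zero] using hgf.symm)
    simpa using Q.add_mem this hg
  refine ⟨K, q, hqprime, ?_⟩
  rw [← hQP, hQeq, Ideal.comap_comap]
  rfl

lemma prime_le_ker_mark [Finite G] {P : Ideal (BurnsideRing G)} (hP : P.IsPrime)
    {H : Subgroup G} (hle : P ≤ RingHom.ker (mark G H)) : P = RingHom.ker (mark G H) := by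
  obtain ⟨K, q, hq, rfl⟩ := prime_classify _ hP
  have hq0 : q = ⊥ := by
    by_contra h
    obtain ⟨n, hn, hn0⟩ := Submodule.exists_mem_ne_zero_of_ne_bot h
    have h1 : ((n : ℤ) : BurnsideRing G) ∈ Ideal.comap (mark G K) q := by
      rw [Ideal.mem_comap, map_intCast]; exact hn
    have h2 := hle h1
    rw [RingHom.mem_ker, map_intCast] at h2
    exact hn0 h2
  subst hq0
  have : Ideal.comap (mark G K) ⊥ = RingHom.ker (mark G K) := by
    rw [← RingHom.ker_eq_comap_bot]
  rw [this] at hle ⊢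
  exact ker_mark_eq_of_le hle

end BurnsideAux


set_option maxHeartbeats 1000000 in
set_option synthInstance.maxHeartbeats 400000 in
/-- For a finite group `G`, the Burnside ring `A(G)` has Krull dimension 1:
the ideals `q(H,p) = φ_H⁻¹(pℤ)` (`p` prime) are maximal with residue field `ℤ/p`, and the
ideals `q(H,0) = ker φ_H` are minimal primes with quotient ring `ℤ`. -/
theorem burnside_krullDim_one (G : Type) [Group G] [Finite G] :
    ringKrullDim (BurnsideRing G) = 1 ∧
      (∀ (H : Subgroup G) (p : ℕ), p.Prime →
        (Ideal.comap (mark G H) (Ideal.span {(p : ℤ)})).IsMaximal ∧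
          Nonempty
            ((BurnsideRing G ⧸ Ideal.comap (mark G H) (Ideal.span {(p : ℤ)})) ≃+*
              ZMod p)) ∧
      (∀ H : Subgroup G,
        RingHom.ker (mark G H) ∈ minimalPrimes (BurnsideRing G) ∧
          Nonempty ((BurnsideRing G ⧸ RingHom.ker (mark G H)) ≃+* ℤ)) := by
  classical
  have part2 : ∀ (H : Subgroup G) (p : ℕ), p.Prime →
      (Ideal.comap (mark G H) (Ideal.span {(p : ℤ)})).IsMaximal ∧
        Nonempty ((BurnsideRing G ⧸ Ideal.comap (mark G H) (Ideal.span {(p : ℤ)})) ≃+* ZMod p) := by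
    intro H p hp
    haveI hmax : (Ideal.span {(p : ℤ)}).IsMaximal :=
      PrincipalIdealRing.isMaximal_of_irreducible (Nat.prime_iff_prime_int.mp hp).irreducible
    constructor
    · exact Ideal.comap_isMaximal_of_surjective _ (mark_surjective H)
    · have hkereq : Ideal.comap (mark G H) (Ideal.span {(p : ℤ)}) =
          RingHom.ker ((Ideal.Quotient.mk (Ideal.span {(p : ℤ)})).comp (mark G H)) := by
        rw [← RingHom.comap_ker, Ideal.mk_ker]
      exact ⟨(Ideal.quotEquivOfEq hkereq).trans <|
        (RingHom.quotientKerEquivOfSurjective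
          (f := (Ideal.Quotient.mk (Ideal.span {(p : ℤ)})).comp (mark G H))
          (by rw [RingHom.coe_comp]
              exact Ideal.Quotient.mk_surjective.comp (mark_surjective H))).trans
        (Int.quotientSpanNatEquivZMod p)⟩
  have part3 : ∀ H : Subgroup G,
      RingHom.ker (mark G H) ∈ minimalPrimes (BurnsideRing G) ∧
        Nonempty ((BurnsideRing G ⧸ RingHom.ker (mark G H)) ≃+* ℤ) := by
    intro H
    constructor
    · refine ⟨⟨RingHom.ker_isPrime _, bot_le⟩, ?_⟩
      intro Q hQ hle
      exact (prime_le_ker_mark hQ.1 hle).ge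
    · exact ⟨RingHom.quotientKerEquivOfSurjective (mark_surjective H)⟩
  refine ⟨?_, part2, part3⟩
  apply le_antisymm
  · rw [ringKrullDim, Order.krullDim]
    apply iSup_le
    intro s
    by_contra hlen
    push_neg at hlen
    have h2 : 1 < s.length := by
      by_contra h
      push_neg at h
      exact (not_lt.mpr (by exact_mod_cast h)) hlen
    set a := s ⟨0, by omega⟩ with ha
    set b := s ⟨1, by omega⟩ with hb
    set c := s ⟨2, by omega⟩ with hc
    have hab : a < b := s.strictMono (by exact Fin.mk_lt_mk.mpr (by omega))
    have hbc : b < c := s.strictMono (by exact Fin.mk_lt_mk.mpr (by omega))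
    obtain ⟨K, q, hq, hbq⟩ := prime_classify b.asIdeal b.isPrime
    rcases eq_or_ne q ⊥ with rfl | hne
    · have hbker : b.asIdeal = RingHom.ker (mark G K) := by
        rw [hbq, ← RingHom.ker_eq_comap_bot]
      have hale : a.asIdeal ≤ RingHom.ker (mark G K) := hbker ▸ hab.le
      have : a.asIdeal = b.asIdeal := by
        rw [hbker]
        exact prime_le_ker_mark a.isPrime hale
      exact hab.ne (PrimeSpectrum.ext this)
    · haveI := hq
      haveI : q.IsMaximal := IsPrime.to_maximal_ideal hne
      have hbmax : b.asIdeal.IsMaximal := by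
        rw [hbq]
        exact Ideal.comap_isMaximal_of_surjective _ (mark_surjective K)
      have : b.asIdeal = c.asIdeal := hbmax.eq_of_le c.isPrime.ne_top hbc.le
      exact hbc.ne (PrimeSpectrum.ext this)
  · haveI h2max : (Ideal.comap (mark G ⊥) (Ideal.span {(2 : ℤ)})).IsMaximal :=
      (part2 ⊥ 2 Nat.prime_two).1
    let P0 : PrimeSpectrum (BurnsideRing G) := ⟨RingHom.ker (mark G ⊥), RingHom.ker_isPrime _⟩
    let P1 : PrimeSpectrum (BurnsideRing G) :=
      ⟨Ideal.comap (mark G ⊥) (Ideal.span {(2 : ℤ)}), h2max.isPrime⟩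
    have hlt : P0 < P1 := by
      apply lt_of_le_of_ne
      · intro x hx
        rw [RingHom.mem_ker] at hx
        rw [Ideal.mem_comap, hx]
        exact Ideal.zero_mem _
      · intro h
        have h1 : ((2 : ℤ) : BurnsideRing G) ∈ P1.asIdeal := by
          rw [Ideal.mem_comap, map_intCast]
          exact Ideal.mem_span_singleton_self _
        rw [← h] at h1
        have h2 := h1
        rw [RingHom.mem_ker, map_intCast] at h2
        norm_num at h2
    let s : LTSeries (PrimeSpectrum (BurnsideRing G)) :=
      { length := 1
        toFun := ![P0, P1]
        step := fun i => by
          fin_cases i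
          simpa using hlt }
    have hle := Order.LTSeries.length_le_krullDim s
    rw [ringKrullDim]
    simpa [s] using hle
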